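/- Suppose the game is a continuous exact potential game with potential F (each S_i ⊆ ℝ^{m_i} nonempty and connected, V_i and F everywhere differentiable on an open superset of S, and ∂V_i(u_i, u_{-i})/∂u_i = ∂F(u_i, u_{-i})/∂u_i on S for all i), the joint strategy space S is compact and convex, and F is strictly convex on S. Then the game has exactly one pure-strategy Nash equilibrium. -/

import Mathlib

/-- A continuous exact potential game with potential `F`, compact and convex joint
strategy space, and `F` strictly convex on `S`, has exactly one pure-strategy Nash
equilibrium. -/
theorem stmt11 {N : ℕ} (m : Fin N → ℕ)
    (S : ∀ i, Set (EuclideanSpace ℝ (Fin (m i))))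
    (hne : ∀ i, (S i).Nonempty)
    (hconn : ∀ i, IsConnected (S i))
    (hcpt : IsCompact (Set.univ.pi S))
    (hconv : Convex ℝ (Set.univ.pi S))
    (V : ∀ i : Fin N, (∀ j, EuclideanSpace ℝ (Fin (m j))) → ℝ)
    (F : (∀ j, EuclideanSpace ℝ (Fin (m j))) → ℝ)
    (hstrict : StrictConvexOn ℝ (Set.univ.pi S) F)
    (O : Set (∀ j, EuclideanSpace ℝ (Fin (m j))))
    (hO : IsOpen O) (hSO : Set.univ.pi S ⊆ O)
    (hVd : ∀ i, DifferentiableOn ℝ (V i) O)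
    (hFd : DifferentiableOn ℝ F O)
    (hgrad : ∀ (i : Fin N) (u : ∀ j, EuclideanSpace ℝ (Fin (m j))), u ∈ Set.univ.pi S →
      fderiv ℝ (fun x => V i (Function.update u i x)) (u i) =
        fderiv ℝ (fun x => F (Function.update u i x)) (u i)) :
    ∃! ustar : ∀ j, EuclideanSpace ℝ (Fin (m j)),
      ustar ∈ Set.univ.pi S ∧
        ∀ (i : Fin N), ∀ ui ∈ S i,
          V i ustar ≤ V i (Function.update ustar i ui) := by
  classical
  set T : Set (∀ j, EuclideanSpace ℝ (Fin (m j))) := Set.univ.pi S with hTdef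
  -- membership of updates
  have updmem : ∀ u ∈ T, ∀ (i : Fin N), ∀ x ∈ S i, Function.update u i x ∈ T := by
    intro u hu i x hx j _
    rcases eq_or_ne j i with rfl | hji
    · simpa using hx
    · rw [Function.update_of_ne hji]
      exact hu j (Set.mem_univ j)
  -- segment points
  have segmem : ∀ u ∈ T, ∀ (i : Fin N), ∀ x ∈ S i, ∀ t ∈ Set.Icc (0:ℝ) 1,
      Function.update u i (u i + t • (x - u i)) ∈ T := by
    intro u hu i x hx t ht
    have hco := hconv hu (updmem u hu i x hx) (by linarith [ht.2] : (0:ℝ) ≤ 1 - t) ht.1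
      (by ring)
    have : (1 - t) • u + t • Function.update u i x
        = Function.update u i (u i + t • (x - u i)) := by
      funext j
      rcases eq_or_ne j i with rfl | hji
      · simp only [Pi.add_apply, Pi.smul_apply, Function.update_self]
        module
      · simp only [Pi.add_apply, Pi.smul_apply, Function.update_of_ne hji]
        module
    rwa [this] at hco
  -- nonemptiness and a minimizer of F on T
  have hTne : T.Nonempty := ⟨fun j => (hne j).choose, fun j _ => (hne j).choose_spec⟩
  obtain ⟨u0, hu0T, hmin⟩ :=
    hcpt.exists_isMinOn hTne ((hFd.continuousOn).mono hSO)
  -- key: along the i-th coordinate within S, V i - F is constant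
  have key : ∀ u ∈ T, ∀ (i : Fin N), ∀ x ∈ S i,
      V i (Function.update u i x) - F (Function.update u i x) = V i u - F u := by
    intro u hu i x hx
    set c : ℝ → EuclideanSpace ℝ (Fin (m i)) := fun t => u i + t • (x - u i) with hc
    set ψ : ℝ → ℝ := fun t =>
      V i (Function.update u i (c t)) - F (Function.update u i (c t)) with hψ
    have hder : ∀ t ∈ Set.Icc (0:ℝ) 1, HasDerivAt ψ 0 t := by
      intro t ht
      have hmemT : Function.update u i (c t) ∈ T := segmem u hu i x hx t ht
      have hmemO : Function.update u i (c t) ∈ O := hSO hmemT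
      have hct : HasDerivAt c (x - u i) t := by
        simpa [hc] using ((hasDerivAt_id t).smul_const (x - u i)).const_add (u i)
      have hupd := hasFDerivAt_update (𝕜 := ℝ) u (c t)
      have hVat : DifferentiableAt ℝ (V i) (Function.update u i (c t)) :=
        (hVd i).differentiableAt (hO.mem_nhds hmemO)
      have hFat : DifferentiableAt ℝ F (Function.update u i (c t)) :=
        hFd.differentiableAt (hO.mem_nhds hmemO)
      have hVc : DifferentiableAt ℝ (fun y => V i (Function.update u i y)) (c t) :=
        hVat.comp _ hupd.differentiableAt
      have hFc : DifferentiableAt ℝ (fun y => F (Function.update u i y)) (c t) :=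
        hFat.comp _ hupd.differentiableAt
      have hg := hgrad i (Function.update u i (c t)) hmemT
      have hupd2 : ∀ (G : (∀ j, EuclideanSpace ℝ (Fin (m j))) → ℝ),
          (fun y => G (Function.update (Function.update u i (c t)) i y))
            = fun y => G (Function.update u i y) := by
        intro G; funext y; rw [Function.update_idem]
      rw [hupd2 (V i), hupd2 F, Function.update_self] at hg
      have hVder : HasDerivAt (fun t => V i (Function.update u i (c t)))
          ((fderiv ℝ (fun y => V i (Function.update u i y)) (c t)) (x - u i)) t :=
        hVc.hasFDerivAt.comp_hasDerivAt t hct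
      have hFder : HasDerivAt (fun t => F (Function.update u i (c t)))
          ((fderiv ℝ (fun y => F (Function.update u i y)) (c t)) (x - u i)) t :=
        hFc.hasFDerivAt.comp_hasDerivAt t hct
      have := hVder.sub hFder
      rw [hg, sub_self] at this
      exact this
    have hψconst : ‖ψ 1 - ψ 0‖ ≤ 0 * ‖(1:ℝ) - 0‖ :=
      (convex_Icc (0:ℝ) 1).norm_image_sub_le_of_norm_hasDerivWithin_le
        (f' := fun _ => 0)
        (fun t ht => (hder t ht).hasDerivWithinAt)
        (fun t _ => by simp)
        (Set.left_mem_Icc.2 zero_le_one) (Set.right_mem_Icc.2 zero_le_one)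
    have h10 : ψ 1 = ψ 0 := sub_eq_zero.1 (by simpa using hψconst)
    have hc1 : c 1 = x := by simp [hc]
    have hc0 : c 0 = u i := by simp [hc]
    have hψ1 : ψ 1 = V i (Function.update u i x) - F (Function.update u i x) := by
      rw [hψ]; simp only [hc1]
    have hψ0 : ψ 0 = V i u - F u := by
      rw [hψ]; simp only [hc0, Function.update_eq_self]
    rw [hψ1, hψ0] at h10
    exact h10
  -- any Nash equilibrium is a minimizer of F on T
  have nash_min : ∀ u ∈ T,
      (∀ (i : Fin N), ∀ ui ∈ S i, V i u ≤ V i (Function.update u i ui)) →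
      IsMinOn F T u := by
    intro u huT hNash
    -- coordinate-wise minimality of F
    have hFcoord : ∀ (i : Fin N), ∀ x ∈ S i, F u ≤ F (Function.update u i x) := by
      intro i x hx
      have hk := key u huT i x hx
      have := hNash i x hx
      linarith
    rw [isMinOn_iff]
    intro v hv
    have huO : u ∈ O := hSO huT
    have hFu : DifferentiableAt ℝ F u := hFd.differentiableAt (hO.mem_nhds huO)
    -- directional derivative of F at u in direction v - u is nonnegative
    have hdir : 0 ≤ (fderiv ℝ F u) (v - u) := by
      have hsum : (fderiv ℝ F u) (v - u)
          = ∑ i, (fderiv ℝ F u) (Pi.single i ((v - u) i)) := by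
        rw [← map_sum]
        congr 1
        exact (Finset.univ_sum_single (v - u)).symm
      rw [hsum]
      refine Finset.sum_nonneg fun i _ => ?_
      -- partial derivative nonneg
      have hviS : v i ∈ S i := hv i (Set.mem_univ i)
      set w : EuclideanSpace ℝ (Fin (m i)) := v i - u i with hw
      set h : ℝ → ℝ := fun t => F (Function.update u i (u i + t • w)) with hh
      -- derivative of h at 0
      have hct : HasDerivAt (fun t : ℝ => u i + t • w) w 0 := by
        simpa using ((hasDerivAt_id (0:ℝ)).smul_const w).const_add (u i)
      have hupd := hasFDerivAt_update (𝕜 := ℝ) u (u i)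
      have hcomp : HasFDerivAt (fun y => F (Function.update u i y))
          ((fderiv ℝ F u).comp
            (ContinuousLinearMap.pi (Pi.single i (ContinuousLinearMap.id ℝ _)))) (u i) := by
        have : HasFDerivAt F (fderiv ℝ F u) (Function.update u i (u i)) := by
          rw [Function.update_eq_self]; exact hFu.hasFDerivAt
        exact this.comp (u i) hupd
      have hhder : HasDerivAt h
          ((fderiv ℝ F u)
            ((ContinuousLinearMap.pi (Pi.single i (ContinuousLinearMap.id ℝ _))) w)) 0 := by
        have hcomp' : HasFDerivAt (fun y => F (Function.update u i y))
            ((fderiv ℝ F u).comp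
              (ContinuousLinearMap.pi (Pi.single i (ContinuousLinearMap.id ℝ _))))
            ((fun t : ℝ => u i + t • w) 0) := by simpa using hcomp
        have := hcomp'.comp_hasDerivAt 0 hct
        exact this
      have hLw : (ContinuousLinearMap.pi
          (Pi.single i (ContinuousLinearMap.id ℝ (EuclideanSpace ℝ (Fin (m i)))))) w
          = (Pi.single i w : ∀ j, EuclideanSpace ℝ (Fin (m j))) := by
        funext j
        rcases eq_or_ne j i with rfl | hji
        · simp [ContinuousLinearMap.pi_apply]
        · simp [ContinuousLinearMap.pi_apply, Pi.single_eq_of_ne hji]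
      rw [hLw] at hhder
      -- h t ≥ h 0 for t ∈ Ioc 0 1
      have hmono : ∀ t ∈ Set.Ioc (0:ℝ) 1, h 0 ≤ h t := by
        intro t ht
        have hmem : Function.update u i (u i + t • (v i - u i)) ∈ T :=
          segmem u huT i (v i) hviS t ⟨ht.1.le, ht.2⟩
        have hS : u i + t • (v i - u i) ∈ S i := by
          have := hmem i (Set.mem_univ i)
          simpa using this
        have := hFcoord i _ hS
        simpa [hh, hw, Function.update_eq_self] using this
      -- derivative at 0 within Ioi 0, slopes nonneg
      have hwithin : HasDerivWithinAt h ((fderiv ℝ F u) (Pi.single i w)) (Set.Ioi (0:ℝ)) 0 :=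
        hhder.hasDerivWithinAt
      rw [hasDerivWithinAt_iff_tendsto_slope' (Set.notMem_Ioi_self)] at hwithin
      have hnonneg : ∀ᶠ t in nhdsWithin (0:ℝ) (Set.Ioi 0), 0 ≤ slope h 0 t := by
        filter_upwards [Ioc_mem_nhdsGT_of_mem
          (Set.mem_Ico.2 ⟨le_refl (0:ℝ), zero_lt_one⟩)] with t ht
        rw [slope_def_field]
        have := hmono t ht
        have h1 : 0 ≤ h t - h 0 := by linarith
        have h2 : 0 < t - 0 := by simpa using ht.1
        positivity
      have hpw : (v - u) i = w := by simp [hw]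
      rw [hpw]
      exact ge_of_tendsto hwithin hnonneg
    -- convexity of F along the segment gives F u ≤ F v
    set g : ℝ → ℝ := fun t => F (u + t • (v - u)) with hg
    have hgline : g = F ∘ (AffineMap.lineMap u v) := by
      funext t
      simp only [hg, Function.comp_apply, AffineMap.lineMap_apply_module']
      rw [add_comm]
    have hgconv : ConvexOn ℝ (Set.Icc (0:ℝ) 1) g := by
      rw [hgline]
      refine ((hstrict.convexOn).comp_affineMap (AffineMap.lineMap u v)).subset ?_
        (convex_Icc 0 1)
      intro t ht
      show AffineMap.lineMap u v t ∈ T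
      rw [AffineMap.lineMap_apply_module]
      exact hconv huT hv (by linarith [ht.2]) ht.1 (by ring)
    have hgder : HasDerivAt g ((fderiv ℝ F u) (v - u)) 0 := by
      have hinner : HasDerivAt (fun t : ℝ => u + t • (v - u)) (v - u) 0 := by
        simpa using ((hasDerivAt_id (0:ℝ)).smul_const (v - u)).const_add u
      have hFat : HasFDerivAt F (fderiv ℝ F u) ((fun t : ℝ => u + t • (v - u)) 0) := by
        simpa using hFu.hasFDerivAt
      exact hFat.comp_hasDerivAt 0 hinner
    have hslope := hgconv.le_slope_of_hasDerivWithinAt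
      (Set.left_mem_Icc.2 zero_le_one) (Set.right_mem_Icc.2 zero_le_one) zero_lt_one
      hgder.hasDerivWithinAt
    rw [slope_def_field] at hslope
    have hg1 : g 1 = F v := by simp [hg]
    have hg0 : g 0 = F u := by simp [hg]
    rw [hg1, hg0] at hslope
    have : 0 ≤ (F v - F u) / (1 - 0) := le_trans hdir hslope
    have : 0 ≤ F v - F u := by simpa using this
    linarith
  -- existence: u0 is a Nash equilibrium
  refine ⟨u0, ⟨hu0T, ?_⟩, ?_⟩
  · intro i x hx
    have hk := key u0 hu0T i x hx
    have hm := isMinOn_iff.1 hmin _ (updmem u0 hu0T i x hx)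
    linarith
  · -- uniqueness
    rintro u ⟨huT, hNash⟩
    exact hstrict.eq_of_isMinOn (nash_min u huT hNash) hmin huT hu0T
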